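/- Let p be an odd prime and v an n-dimensional integer vector each of whose entries is nonzero modulo p, and let u be the shortest p-representative of v. Suppose uᵀe − p = s·p for some integer s with −3 ≤ s ≤ 3 and uᵀu ≤ p². Then every perfect p-representative w of v can be written as w = u + Σ_{i∈I} p·eᵢ − Σ_{j∈D} p·eⱼ, where eᵢ denotes the i-th standard unit vector and I and D are disjoint (possibly empty) subsets of the index set {1, …, n} satisfying: (i) |I| + |D| ≤ 3; (ii) |D| − |I| = s; (iii) uᵢ < 0 for every i ∈ I and uⱼ > 0 for every j ∈ D; and (iv) 2p·Σ_{k∈I∪D} |uₖ| = uᵀu + p²·(|I| + |D| − 1). -/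

import Mathlib

open Matrix BigOperators

/-- An adjacency matrix: a symmetric 0-1 integer matrix with zero diagonal. -/
def IsAdjacencyMat {n : ℕ} (A : Matrix (Fin n) (Fin n) ℤ) : Prop :=
  A.IsSymm ∧ (∀ i j, A i j = 0 ∨ A i j = 1) ∧ (∀ i, A i i = 0)

/-- The walk matrix W = [e, Ae, ..., A^{n-1}e]. -/
def walkMatrix {n : ℕ} (A : Matrix (Fin n) (Fin n) ℤ) : Matrix (Fin n) (Fin n) ℤ :=
  Matrix.of fun i j => ((A ^ (j : ℕ)) *ᵥ fun _ => (1 : ℤ)) i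

/-- The all-ones matrix J. -/
def allOnes (n : ℕ) : Matrix (Fin n) (Fin n) ℤ := Matrix.of fun _ _ => 1

/-- Two symmetric integer matrices are generalized cospectral if they are cospectral and
their "complements" J - I - · are cospectral. -/
def GenCospectral {n : ℕ} (A B : Matrix (Fin n) (Fin n) ℤ) : Prop :=
  A.charpoly = B.charpoly ∧ (allOnes n - 1 - A).charpoly = (allOnes n - 1 - B).charpoly

/-- Two (adjacency) matrices are isomorphic if Pᵀ A P = B for some permutation matrix P. -/
def IsomorphicMat {n : ℕ} (A B : Matrix (Fin n) (Fin n) ℤ) : Prop :=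
  ∃ σ : Equiv.Perm (Fin n),
    (σ.toPEquiv.toMatrix : Matrix (Fin n) (Fin n) ℤ)ᵀ * A * σ.toPEquiv.toMatrix = B

/-- A graph (given by its adjacency matrix) is determined by its generalized spectrum. -/
def IsDGS {n : ℕ} (A : Matrix (Fin n) (Fin n) ℤ) : Prop :=
  ∀ B : Matrix (Fin n) (Fin n) ℤ, IsAdjacencyMat B → GenCospectral A B → IsomorphicMat A B

/-- Membership in the family F_n^p : det W = ±2^⌊n/2⌋ p² b with b odd square-free positive,
p ∤ b, and rank of W over ℤ/pℤ equals n - 1. -/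
def MemF {n : ℕ} (p : ℕ) (A : Matrix (Fin n) (Fin n) ℤ) : Prop :=
  IsAdjacencyMat A ∧
  (∃ b : ℤ, 0 < b ∧ Odd b ∧ Squarefree b ∧ ¬ ((p : ℤ) ∣ b) ∧
    ((walkMatrix A).det = 2 ^ (n / 2) * (p : ℤ) ^ 2 * b ∨
     (walkMatrix A).det = -(2 ^ (n / 2) * (p : ℤ) ^ 2 * b))) ∧
  ((walkMatrix A).map (Int.cast : ℤ → ZMod p)).rank = n - 1

/-- A regular orthogonal matrix: QᵀQ = I and Qe = e. -/
def IsRegularOrthogonal {n : ℕ} (Q : Matrix (Fin n) (Fin n) ℚ) : Prop :=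
  Qᵀ * Q = 1 ∧ (Q *ᵥ fun _ => (1 : ℚ)) = fun _ => 1

/-- The level of a rational matrix Q is the smallest positive integer k
such that kQ is an integer matrix. -/
def HasLevel {n : ℕ} (Q : Matrix (Fin n) (Fin n) ℚ) (ℓ : ℕ) : Prop :=
  IsLeast {k : ℕ | 0 < k ∧ ∀ i j, ∃ m : ℤ, (k : ℚ) * Q i j = (m : ℚ)} ℓ

/-- A primitive matrix: a regular rational orthogonal matrix of level p such that
the integer matrix pQ has rank 1 over ℤ/pℤ. -/
def IsPrimitiveMat {n : ℕ} (p : ℕ) (Q : Matrix (Fin n) (Fin n) ℚ) : Prop :=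
  IsRegularOrthogonal Q ∧ HasLevel Q p ∧
  ∃ M : Matrix (Fin n) (Fin n) ℤ,
    M.map (Int.cast : ℤ → ℚ) = (p : ℚ) • Q ∧
    (M.map (Int.cast : ℤ → ZMod p)).rank = 1

/-- A primitive matrix Q is generated from an integer vector v if every column of the
integer matrix pQ is congruent modulo p to an integer multiple of v. -/
def GeneratedFrom {n : ℕ} (p : ℕ) (Q : Matrix (Fin n) (Fin n) ℚ) (v : Fin n → ℤ) : Prop :=
  IsPrimitiveMat p Q ∧
  ∀ M : Matrix (Fin n) (Fin n) ℤ, M.map (Int.cast : ℤ → ℚ) = (p : ℚ) • Q →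
    ∀ j, ∃ c : ℤ, ∀ i, ((M i j : ℤ) : ZMod p) = (c : ZMod p) * ((v i : ℤ) : ZMod p)

/-- w is a perfect p-representative of v: w ≡ v (mod p), wᵀe = p and wᵀw = p². -/
def IsPerfectRep {n : ℕ} (p : ℕ) (v w : Fin n → ℤ) : Prop :=
  (∀ i, ((w i : ℤ) : ZMod p) = ((v i : ℤ) : ZMod p)) ∧
  (∑ i, w i) = (p : ℤ) ∧ (∑ i, w i * w i) = (p : ℤ) ^ 2

/-- u is the shortest p-representative of v: u ≡ v (mod p) and |uᵢ| ≤ (p-1)/2 for all i. -/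
def IsShortestRep {n : ℕ} (p : ℕ) (v u : Fin n → ℤ) : Prop :=
  (∀ i, ((u i : ℤ) : ZMod p) = ((v i : ℤ) : ZMod p)) ∧ ∀ i, |u i| ≤ ((p : ℤ) - 1) / 2

theorem stmt18 (n p : ℕ) (hp : p.Prime) (hpodd : Odd p)
    (v u : Fin n → ℤ) (hv : ∀ i, ((v i : ℤ) : ZMod p) ≠ 0)
    (hu : IsShortestRep p v u)
    (s : ℤ) (hs : (∑ i, u i) - (p : ℤ) = s * (p : ℤ)) (hs₁ : -3 ≤ s) (hs₂ : s ≤ 3)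
    (huu : (∑ i, u i * u i) ≤ (p : ℤ) ^ 2)
    (w : Fin n → ℤ) (hw : IsPerfectRep p v w) :
    ∃ I D : Finset (Fin n), Disjoint I D ∧
      (∀ i, w i = u i + (if i ∈ I then (p : ℤ) else 0) - (if i ∈ D then (p : ℤ) else 0)) ∧
      I.card + D.card ≤ 3 ∧
      ((D.card : ℤ) - (I.card : ℤ) = s) ∧
      (∀ i ∈ I, u i < 0) ∧ (∀ j ∈ D, 0 < u j) ∧
      2 * (p : ℤ) * (∑ k ∈ I ∪ D, |u k|) =
        (∑ i, u i * u i) + (p : ℤ) ^ 2 * ((I.card : ℤ) + (D.card : ℤ) - 1) := by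
  obtain ⟨hwv, hwe, hww⟩ := hw
  obtain ⟨huv, hub⟩ := hu
  set P : ℤ := (p : ℤ) with hPdef
  have hP3 : (3:ℤ) ≤ P := by
    have h2 := hp.two_le
    have hne : p ≠ 2 := by rintro rfl; simp [Nat.odd_iff] at hpodd
    have h3 : 3 ≤ p := by omega
    rw [hPdef]; exact_mod_cast h3
  have hPodd : P % 2 = 1 := by
    have hO : Odd P := by rw [hPdef]; exact_mod_cast hpodd
    exact Int.odd_iff.mp hO
  have hP0 : P ≠ 0 := by omega
  have hdvd : ∀ i, P ∣ (w i - u i) := by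
    intro i
    have h1 : ((w i : ℤ) : ZMod p) = ((u i : ℤ) : ZMod p) := by rw [hwv i, huv i]
    have h2 : w i ≡ u i [ZMOD (p:ℕ)] := (ZMod.intCast_eq_intCast_iff _ _ _).mp h1
    exact h2.symm.dvd
  set d : Fin n → ℤ := fun i => (w i - u i) / P with hddef
  have hwd : ∀ i, w i = u i + P * d i := by
    intro i
    have h := Int.ediv_mul_cancel (hdvd i)
    simp only [hddef]
    linarith [h]
  have hu0 : ∀ i, u i ≠ 0 := by
    intro i h
    exact hv i (by rw [← huv i, h]; simp)
  have hub2 : ∀ i, -(P-1) ≤ 2 * u i ∧ 2 * u i ≤ P - 1 := by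
    intro i
    have h := abs_le.mp (hub i)
    obtain ⟨h1, h2⟩ := h
    omega
  have hwle : ∀ i, w i * w i ≤ P^2 := by
    intro i
    rw [← hww]
    exact Finset.single_le_sum (fun j _ => mul_self_nonneg (w j)) (Finset.mem_univ i)
  have hdpos : ∀ i, 0 < d i → d i = 1 ∧ u i < 0 := by
    intro i hdi
    obtain ⟨h1, h2⟩ := hub2 i
    have h3 := hwle i
    have h4 := hwd i
    have h5 := hu0 i
    have hd1 : d i = 1 := by
      by_contra h
      have hd2 : 2 ≤ d i := by omega
      have hPd : 4 * P ≤ 2 * (P * d i) := by nlinarith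
      have hwlb : 3 * P + 1 ≤ 2 * w i := by linarith
      nlinarith
    refine ⟨hd1, ?_⟩
    by_contra h
    have hu1 : 1 ≤ u i := by omega
    rw [hd1] at h4
    nlinarith [sq_nonneg (w i - P - 1)]
  have hdneg : ∀ i, d i < 0 → d i = -1 ∧ 0 < u i := by
    intro i hdi
    obtain ⟨h1, h2⟩ := hub2 i
    have h3 := hwle i
    have h4 := hwd i
    have h5 := hu0 i
    have hd1 : d i = -1 := by
      by_contra h
      have hd2 : d i ≤ -2 := by omega
      have hPd : 2 * (P * d i) ≤ -(4 * P) := by nlinarith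
      have hwlb : 2 * w i ≤ -(3 * P + 1) := by linarith
      nlinarith
    refine ⟨hd1, ?_⟩
    by_contra h
    have hu1 : u i ≤ -1 := by omega
    rw [hd1] at h4
    nlinarith [sq_nonneg (w i + P + 1)]
  classical
  set I : Finset (Fin n) := Finset.univ.filter (fun i => 0 < d i) with hIdef
  set D : Finset (Fin n) := Finset.univ.filter (fun i => d i < 0) with hDdef
  have hmemI : ∀ i, i ∈ I ↔ 0 < d i := by intro i; simp [hIdef]
  have hmemD : ∀ i, i ∈ D ↔ d i < 0 := by intro i; simp [hDdef]
  have hdisj : Disjoint I D := by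
    rw [Finset.disjoint_left]
    intro i hi hid
    rw [hmemI] at hi; rw [hmemD] at hid; omega
  have hwi : ∀ i, w i = u i + (if i ∈ I then P else 0) - (if i ∈ D then P else 0) := by
    intro i
    by_cases hi : i ∈ I
    · rw [if_pos hi, if_neg (Finset.disjoint_left.mp hdisj hi)]
      have h1 := (hdpos i ((hmemI i).mp hi)).1
      rw [hwd i, h1]; ring
    · by_cases hid : i ∈ D
      · rw [if_neg hi, if_pos hid]
        have h1 := (hdneg i ((hmemD i).mp hid)).1
        rw [hwd i, h1]; ring
      · rw [if_neg hi, if_neg hid]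
        have h0 : d i = 0 := by
          rw [hmemI] at hi; rw [hmemD] at hid; omega
        rw [hwd i, h0]; ring
  have hIneg : ∀ i ∈ I, u i < 0 := fun i hi => (hdpos i ((hmemI i).mp hi)).2
  have hDpos : ∀ i ∈ D, 0 < u i := fun i hi => (hdneg i ((hmemD i).mp hi)).2
  have hbig : ∀ i ∈ I ∪ D, (P+1)^2 ≤ 4 * (w i * w i) := by
    intro i hi
    obtain ⟨h1, h2⟩ := hub2 i
    rcases Finset.mem_union.mp hi with hi | hi
    · have hd1 := (hdpos i ((hmemI i).mp hi)).1
      have h4 := hwd i; rw [hd1] at h4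
      nlinarith [sq_nonneg (2 * w i - P - 1)]
    · have hd1 := (hdneg i ((hmemD i).mp hi)).1
      have h4 := hwd i; rw [hd1] at h4
      nlinarith [sq_nonneg (2 * w i + P + 1)]
  have hsub : ∑ i ∈ I ∪ D, (w i * w i) ≤ P^2 := by
    rw [← hww]
    exact Finset.sum_le_sum_of_subset_of_nonneg (Finset.subset_univ _)
      (fun i _ _ => mul_self_nonneg _)
  have hcardID : (I ∪ D).card = I.card + D.card := Finset.card_union_of_disjoint hdisj
  have hcard : I.card + D.card ≤ 3 := by
    by_contra hcon
    have hs2 : ((I ∪ D).card : ℤ) * ((P+1)^2) ≤ ∑ i ∈ I ∪ D, 4 * (w i * w i) := by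
      have h := Finset.card_nsmul_le_sum (I ∪ D) (fun i => 4 * (w i * w i)) ((P+1)^2) hbig
      simpa [nsmul_eq_mul] using h
    rw [← Finset.mul_sum] at hs2
    have h4' : (4:ℤ) ≤ ((I ∪ D).card : ℤ) := by
      exact_mod_cast (by omega : 4 ≤ (I ∪ D).card)
    nlinarith [hsub, hs2, h4', hP3, sq_nonneg (P+1)]
  have hsumIte : ∀ (T : Finset (Fin n)), (∑ i, (if i ∈ T then P else 0)) = (T.card : ℤ) * P := by
    intro T
    rw [Finset.sum_ite_mem, Finset.univ_inter, Finset.sum_const, nsmul_eq_mul]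
  have hsw : (∑ i, w i) = (∑ i, u i) + (I.card : ℤ) * P - (D.card : ℤ) * P := by
    rw [Finset.sum_congr rfl (fun i _ => hwi i), Finset.sum_sub_distrib, Finset.sum_add_distrib,
        hsumIte, hsumIte]
  have key : P * ((D.card : ℤ) - (I.card : ℤ) - s) = 0 := by
    rw [hwe] at hsw
    linear_combination hsw + hs
  have hDI : (D.card : ℤ) - (I.card : ℤ) = s := by
    rcases mul_eq_zero.mp key with h | h
    · exact absurd h hP0
    · linarith
  have hsq : ∀ i, w i * w i =
      u i * u i + (if i ∈ I then P*P + 2*P*u i else 0) + (if i ∈ D then P*P - 2*P*u i else 0) := by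
    intro i
    rw [hwi i]
    by_cases hi : i ∈ I
    · rw [if_pos hi, if_pos hi, if_neg (Finset.disjoint_left.mp hdisj hi),
        if_neg (Finset.disjoint_left.mp hdisj hi)]
      ring
    · by_cases hid : i ∈ D
      · rw [if_neg hi, if_neg hi, if_pos hid, if_pos hid]; ring
      · rw [if_neg hi, if_neg hi, if_neg hid, if_neg hid]; ring
  have E1 : P^2 = (∑ i, u i * u i)
      + ((I.card : ℤ) * (P*P) + 2*P*(∑ i ∈ I, u i))
      + ((D.card : ℤ) * (P*P) - 2*P*(∑ i ∈ D, u i)) := by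
    rw [← hww, Finset.sum_congr rfl (fun i _ => hsq i), Finset.sum_add_distrib,
      Finset.sum_add_distrib, Finset.sum_ite_mem, Finset.sum_ite_mem, Finset.univ_inter,
      Finset.univ_inter, Finset.sum_add_distrib, Finset.sum_sub_distrib, Finset.sum_const,
      Finset.sum_const, nsmul_eq_mul, nsmul_eq_mul, ← Finset.mul_sum, ← Finset.mul_sum]
  have habs : (∑ k ∈ I ∪ D, |u k|) = -(∑ k ∈ I, u k) + (∑ k ∈ D, u k) := by
    rw [Finset.sum_union hdisj, ← Finset.sum_neg_distrib]
    congr 1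
    · exact Finset.sum_congr rfl (fun i hi => abs_of_neg (hIneg i hi))
    · exact Finset.sum_congr rfl (fun i hi => abs_of_pos (hDpos i hi))
  refine ⟨I, D, hdisj, hwi, hcard, hDI, hIneg, hDpos, ?_⟩
  linear_combination E1 + (2*P) * habs
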